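/- Let ℒ(x) = coth(x) - 1/x for x > 0. Then the matrix-valued function K(y) = ℒ'(‖y‖)·(y yᵀ/‖y‖²) + (ℒ(‖y‖)/‖y‖)·(I - y yᵀ/‖y‖²), defined for y ∈ ℝⁿ \ {0}, extends continuously to y = 0 with value K(0) = (1/3)·I. -/

import Mathlib

open Filter Topology

noncomputable def Real.coth (x : ℝ) : ℝ := Real.cosh x / Real.sinh x

/-- The Langevin function `ℒ(x) = coth x - 1/x`. -/
noncomputable def langevin (x : ℝ) : ℝ := Real.coth x - 1 / x

/-- The matrix-valued MPI kernel
`K(y) = ℒ'(‖y‖)·(y yᵀ/‖y‖²) + (ℒ(‖y‖)/‖y‖)·(I - y yᵀ/‖y‖²)` for `y ≠ 0`. -/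
noncomputable def mpiKernel {n : ℕ} (y : EuclideanSpace ℝ (Fin n)) :
    Matrix (Fin n) (Fin n) ℝ :=
  deriv langevin ‖y‖ • ((‖y‖ ^ 2)⁻¹ • Matrix.of fun i j => y i * y j) +
    (langevin ‖y‖ / ‖y‖) •
      ((1 : Matrix (Fin n) (Fin n) ℝ) - (‖y‖ ^ 2)⁻¹ • Matrix.of fun i j => y i * y j)

lemma coord_le (n : ℕ) (y : EuclideanSpace ℝ (Fin n)) (i : Fin n) : |y i| ≤ ‖y‖ := by
  rw [EuclideanSpace.norm_eq]
  have h1 : |y i| = Real.sqrt (‖y i‖ ^ 2) := by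
    rw [Real.norm_eq_abs, Real.sqrt_sq_eq_abs, abs_abs]
  rw [h1]
  exact Real.sqrt_le_sqrt (Finset.single_le_sum (fun j _ => sq_nonneg (‖y j‖)) (Finset.mem_univ i))

lemma tendsto_sinh_div : Tendsto (fun x : ℝ => Real.sinh x / x) (𝓝[>] 0) (𝓝 1) := by
  have h := hasDerivAt_iff_tendsto_slope.mp (Real.hasDerivAt_sinh 0)
  rw [Real.cosh_zero] at h
  have h2 : Tendsto (slope Real.sinh 0) (𝓝[>] 0) (𝓝 1) :=
    h.mono_left (nhdsWithin_mono _ (fun x hx => ne_of_gt hx))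
  refine h2.congr' ?_
  filter_upwards [self_mem_nhdsWithin] with x hx
  simp [slope_def_field, Real.sinh_zero]

lemma tendsto_div_sinh : Tendsto (fun x : ℝ => x / Real.sinh x) (𝓝[>] 0) (𝓝 1) := by
  have h := tendsto_sinh_div.inv₀ one_ne_zero
  rw [inv_one] at h
  refine h.congr' ?_
  filter_upwards [self_mem_nhdsWithin] with x hx
  rw [Set.mem_Ioi] at hx
  field_simp

lemma tendsto_cosh_sub_one_div :
    Tendsto (fun x : ℝ => (Real.cosh x - 1) / (3 * x ^ 2)) (𝓝[>] 0) (𝓝 (1/6)) := by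
  apply HasDerivAt.lhopital_zero_nhdsGT (f' := fun x => Real.sinh x) (g' := fun x => 6 * x)
  · filter_upwards with x
    simpa using (Real.hasDerivAt_cosh x).sub_const (1:ℝ)
  · filter_upwards with x
    have h := (hasDerivAt_pow 2 x).const_mul (3:ℝ)
    convert h using 1 <;> try (push_cast; ring)
    all_goals rfl
  · filter_upwards [self_mem_nhdsWithin] with x hx
    rw [Set.mem_Ioi] at hx; positivity
  · have h : Tendsto (fun x : ℝ => Real.cosh x - 1) (𝓝 0) (𝓝 0) :=
      Continuous.tendsto' (by continuity) 0 0 (by simp)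
    exact h.mono_left nhdsWithin_le_nhds
  · have h : Tendsto (fun x : ℝ => 3 * x ^ 2) (𝓝 0) (𝓝 0) :=
      Continuous.tendsto' (by continuity) 0 0 (by norm_num)
    exact h.mono_left nhdsWithin_le_nhds
  · have h : Tendsto (fun x : ℝ => (Real.sinh x / x) * (1/6)) (𝓝[>] 0) (𝓝 (1/6)) := by
      have := tendsto_sinh_div.mul_const (1/6 : ℝ)
      simpa using this
    refine h.congr' ?_
    filter_upwards [self_mem_nhdsWithin] with x hx
    rw [Set.mem_Ioi] at hx
    field_simp

lemma tendsto_sinh_sub_div :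
    Tendsto (fun x : ℝ => (Real.sinh x - x) / x ^ 3) (𝓝[>] 0) (𝓝 (1/6)) := by
  apply HasDerivAt.lhopital_zero_nhdsGT (f' := fun x => Real.cosh x - 1)
    (g' := fun x => 3 * x ^ 2)
  · filter_upwards with x
    exact (Real.hasDerivAt_sinh x).sub (hasDerivAt_id' x)
  · filter_upwards with x
    have h := hasDerivAt_pow 3 x
    convert h using 1 <;> try (push_cast; ring)
    all_goals rfl
  · filter_upwards [self_mem_nhdsWithin] with x hx
    rw [Set.mem_Ioi] at hx; positivity
  · have h : Tendsto (fun x : ℝ => Real.sinh x - x) (𝓝 0) (𝓝 0) :=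
      Continuous.tendsto' (by continuity) 0 0 (by simp)
    exact h.mono_left nhdsWithin_le_nhds
  · have h : Tendsto (fun x : ℝ => x ^ 3) (𝓝 0) (𝓝 0) :=
      Continuous.tendsto' (by continuity) 0 0 (by norm_num)
    exact h.mono_left nhdsWithin_le_nhds
  · exact tendsto_cosh_sub_one_div

lemma tendsto_xcosh :
    Tendsto (fun x : ℝ => (x * Real.cosh x - Real.sinh x) / x ^ 3) (𝓝[>] 0) (𝓝 (1/3)) := by
  apply HasDerivAt.lhopital_zero_nhdsGT (f' := fun x => x * Real.sinh x)
    (g' := fun x => 3 * x ^ 2)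
  · filter_upwards with x
    have h := ((hasDerivAt_id x).mul (Real.hasDerivAt_cosh x)).sub (Real.hasDerivAt_sinh x)
    convert h using 1
    case e'_9 => simp only [id_eq]; ring
    all_goals rfl
  · filter_upwards with x
    have h := hasDerivAt_pow 3 x
    convert h using 1 <;> try (push_cast; ring)
    all_goals rfl
  · filter_upwards [self_mem_nhdsWithin] with x hx
    rw [Set.mem_Ioi] at hx; positivity
  · have h : Tendsto (fun x : ℝ => x * Real.cosh x - Real.sinh x) (𝓝 0) (𝓝 0) :=
      Continuous.tendsto' (by continuity) 0 0 (by simp)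
    exact h.mono_left nhdsWithin_le_nhds
  · have h : Tendsto (fun x : ℝ => x ^ 3) (𝓝 0) (𝓝 0) :=
      Continuous.tendsto' (by continuity) 0 0 (by norm_num)
    exact h.mono_left nhdsWithin_le_nhds
  · have h : Tendsto (fun x : ℝ => (Real.sinh x / x) * (1/3)) (𝓝[>] 0) (𝓝 (1/3)) := by
      have := tendsto_sinh_div.mul_const (1/3 : ℝ)
      simpa using this
    refine h.congr' ?_
    filter_upwards [self_mem_nhdsWithin] with x hx
    rw [Set.mem_Ioi] at hx
    have hx' : x ≠ 0 := ne_of_gt hx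
    field_simp

lemma tendsto_langevin_div : Tendsto (fun x : ℝ => langevin x / x) (𝓝[>] 0) (𝓝 (1/3)) := by
  have h := tendsto_xcosh.mul tendsto_div_sinh
  rw [mul_one] at h
  refine h.congr' ?_
  filter_upwards [self_mem_nhdsWithin] with x hx
  rw [Set.mem_Ioi] at hx
  have hx' : x ≠ 0 := ne_of_gt hx
  have hs : Real.sinh x ≠ 0 := ne_of_gt (Real.sinh_pos_iff.mpr hx)
  simp only [langevin, Real.coth]
  field_simp

lemma deriv_langevin_eq {x : ℝ} (hx : 0 < x) :
    deriv langevin x = 1 / x ^ 2 - 1 / Real.sinh x ^ 2 := by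
  have hx' : x ≠ 0 := ne_of_gt hx
  have hs : Real.sinh x ≠ 0 := ne_of_gt (Real.sinh_pos_iff.mpr hx)
  have h1 : HasDerivAt Real.coth
      ((Real.sinh x * Real.sinh x - Real.cosh x * Real.cosh x) / Real.sinh x ^ 2) x :=
    (Real.hasDerivAt_cosh x).div (Real.hasDerivAt_sinh x) hs
  have h2 : HasDerivAt (fun x : ℝ => 1 / x) (-(1 / x ^ 2)) x := by
    simpa using (hasDerivAt_inv hx').const_mul (1:ℝ)
  have h : HasDerivAt langevin
      ((Real.sinh x * Real.sinh x - Real.cosh x * Real.cosh x) / Real.sinh x ^ 2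
        - -(1 / x ^ 2)) x := h1.sub h2
  rw [h.deriv]
  have hc := Real.cosh_sq x
  field_simp
  linear_combination (-(x ^ 2)) * hc

lemma tendsto_deriv_langevin : Tendsto (deriv langevin) (𝓝[>] 0) (𝓝 (1/3)) := by
  have h : Tendsto (fun x : ℝ =>
      ((Real.sinh x - x) / x ^ 3) * ((Real.sinh x / x + 1)) * (x / Real.sinh x) ^ 2)
      (𝓝[>] 0) (𝓝 (1/3)) := by
    have h0 := (tendsto_sinh_sub_div.mul
        (tendsto_sinh_div.add
          (tendsto_const_nhds : Tendsto (fun _ : ℝ => (1:ℝ)) (𝓝[>] 0) (𝓝 1)))).mul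
      (tendsto_div_sinh.pow 2)
    have he : (1/6 * (1 + 1 : ℝ)) * 1 ^ 2 = 1/3 := by norm_num
    rwa [he] at h0
  refine h.congr' ?_
  filter_upwards [self_mem_nhdsWithin] with x hx
  rw [Set.mem_Ioi] at hx
  rw [deriv_langevin_eq hx]
  have hx' : x ≠ 0 := ne_of_gt hx
  have hs : Real.sinh x ≠ 0 := ne_of_gt (Real.sinh_pos_iff.mpr hx)
  field_simp
  ring


/-- The MPI kernel extends continuously to `y = 0` with value `(1/3)·I`. -/
theorem mpiKernel_tendsto_zero {n : ℕ} :
    Tendsto (fun y : EuclideanSpace ℝ (Fin n) => mpiKernel y)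
      (𝓝[≠] (0 : EuclideanSpace ℝ (Fin n)))
      (𝓝 ((1 / 3 : ℝ) • (1 : Matrix (Fin n) (Fin n) ℝ))) := by
  have hnorm : Tendsto (fun y : EuclideanSpace ℝ (Fin n) => ‖y‖)
      (𝓝[≠] (0 : EuclideanSpace ℝ (Fin n))) (𝓝[>] 0) := by
    rw [tendsto_nhdsWithin_iff]
    constructor
    · have h := (continuous_norm.tendsto (0 : EuclideanSpace ℝ (Fin n)))
      simpa using h.mono_left nhdsWithin_le_nhds
    · filter_upwards [self_mem_nhdsWithin] with y hy
      exact Set.mem_Ioi.mpr (norm_pos_iff.mpr hy)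
  have ha : Tendsto (fun y : EuclideanSpace ℝ (Fin n) => deriv langevin ‖y‖)
      (𝓝[≠] (0 : EuclideanSpace ℝ (Fin n))) (𝓝 (1/3)) := tendsto_deriv_langevin.comp hnorm
  have hb : Tendsto (fun y : EuclideanSpace ℝ (Fin n) => langevin ‖y‖ / ‖y‖)
      (𝓝[≠] (0 : EuclideanSpace ℝ (Fin n))) (𝓝 (1/3)) := tendsto_langevin_div.comp hnorm
  have hab : Tendsto (fun y : EuclideanSpace ℝ (Fin n) =>
      deriv langevin ‖y‖ - langevin ‖y‖ / ‖y‖) (𝓝[≠] (0 : EuclideanSpace ℝ (Fin n))) (𝓝 0) := by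
    simpa using ha.sub hb
  refine tendsto_pi_nhds.mpr ?_
  intro i
  refine tendsto_pi_nhds.mpr ?_
  intro j
  set δ : ℝ := if i = j then 1 else 0 with hδ
  have h1 : Tendsto (fun y : EuclideanSpace ℝ (Fin n) =>
      (deriv langevin ‖y‖ - langevin ‖y‖ / ‖y‖) * ((‖y‖ ^ 2)⁻¹ * (y i * y j)))
      (𝓝[≠] (0 : EuclideanSpace ℝ (Fin n))) (𝓝 0) := by
    apply squeeze_zero_norm' (a := fun y : EuclideanSpace ℝ (Fin n) =>
      |deriv langevin ‖y‖ - langevin ‖y‖ / ‖y‖|)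
    · filter_upwards [self_mem_nhdsWithin] with y hy
      have hypos : 0 < ‖y‖ := norm_pos_iff.mpr hy
      have hP : |(‖y‖ ^ 2)⁻¹ * (y i * y j)| ≤ 1 := by
        rw [abs_mul, abs_inv, abs_mul, abs_of_nonneg (by positivity : (0:ℝ) ≤ ‖y‖ ^ 2)]
        rw [inv_mul_le_iff₀ (by positivity), mul_one]
        calc |y i| * |y j| ≤ ‖y‖ * ‖y‖ :=
              mul_le_mul (coord_le n y i) (coord_le n y j) (abs_nonneg _) (norm_nonneg _)
          _ = ‖y‖ ^ 2 := (sq ‖y‖).symm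
      rw [Real.norm_eq_abs, abs_mul]
      calc |deriv langevin ‖y‖ - langevin ‖y‖ / ‖y‖| * |(‖y‖ ^ 2)⁻¹ * (y i * y j)|
          ≤ |deriv langevin ‖y‖ - langevin ‖y‖ / ‖y‖| * 1 :=
            mul_le_mul_of_nonneg_left hP (abs_nonneg _)
        _ = _ := mul_one _
    · simpa using hab.abs
  have h2 : Tendsto (fun y : EuclideanSpace ℝ (Fin n) => (langevin ‖y‖ / ‖y‖) * δ)
      (𝓝[≠] (0 : EuclideanSpace ℝ (Fin n))) (𝓝 ((1/3) * δ)) := hb.mul_const δ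
  have h3 := h1.add h2
  rw [zero_add] at h3
  have hval : ((1 / 3 : ℝ) • (1 : Matrix (Fin n) (Fin n) ℝ)) i j = (1/3) * δ := by
    simp [Matrix.smul_apply, Matrix.one_apply, hδ]
  rw [hval]
  refine Tendsto.congr ?_ h3
  intro y
  simp only [mpiKernel, Matrix.add_apply, Matrix.smul_apply, Matrix.sub_apply,
    Matrix.one_apply, Matrix.smul_apply, Matrix.of_apply, smul_eq_mul, ← hδ]
  ring
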